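/- Let G be a chordal bipartite graph with parts X = {k_1,…,k_p} and Y = {l_1,…,l_q}. Let G' be the graph whose vertex set consists of the vertices of G, a disjoint copy {m_1,…,m_p} ∪ {n_1,…,n_q} of them, and four new vertices k, l, m, n, and whose edges are: all edges of G; an edge m_i n_j whenever k_i l_j is an edge of G; all edges between K_1 = {k, k_1,…,k_p} and K_2 = {m, m_1,…,m_p}; and the pendant edges l–k and n–m. Then G' is chordal bipartite, i.e. G' is bipartite and has no induced cycle of length six or more. -/

import Mathlib

/-- `D` is a dominating set of `G`: every vertex outside `D` has a neighbour in `D`. -/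
def Dominates {V : Type*} (G : SimpleGraph V) (D : Set V) : Prop :=
  ∀ u, u ∉ D → ∃ v ∈ D, G.Adj u v

/-- `S` is a secure dominating set of `G`. -/
def SecureDominates {V : Type*} (G : SimpleGraph V) (S : Set V) : Prop :=
  Dominates G S ∧
    ∀ u, u ∉ S → ∃ v ∈ S, G.Adj u v ∧ Dominates G ((S \ {v}) ∪ {u})

/-- The graph `G'` obtained from a bipartite graph `G` with parts `X` and `Y`.
Vertices: the original vertices (`Sum.inl u`), a disjoint copy of them
(`Sum.inr (Sum.inl u)`), and four new vertices `k = Sum.inr (Sum.inr 0)`,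
`l = Sum.inr (Sum.inr 1)`, `m = Sum.inr (Sum.inr 2)`, `n = Sum.inr (Sum.inr 3)`.
Edges: all edges of `G`; the copies of the edges of `G` (an edge `mᵢ nⱼ`
whenever `kᵢ lⱼ` is an edge of `G`); all edges between `{k} ∪ X` and the copy
`{m} ∪ X`-copy; and the pendant edges `l - k` and `n - m`. -/
def bipartiteBigExt {V : Type*} (G : SimpleGraph V) (X : Set V) :
    SimpleGraph (V ⊕ V ⊕ Fin 4) :=
  SimpleGraph.fromRel (fun a b =>
    (∃ u v, a = Sum.inl u ∧ b = Sum.inl v ∧ G.Adj u v) ∨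
    (∃ u v, a = Sum.inr (Sum.inl u) ∧ b = Sum.inr (Sum.inl v) ∧ G.Adj u v) ∨
    (∃ u v, a = Sum.inl u ∧ u ∈ X ∧ b = Sum.inr (Sum.inl v) ∧ v ∈ X) ∨
    (∃ u, a = Sum.inl u ∧ u ∈ X ∧ b = Sum.inr (Sum.inr 2)) ∨
    (∃ v, a = Sum.inr (Sum.inr 0) ∧ b = Sum.inr (Sum.inl v) ∧ v ∈ X) ∨
    (a = Sum.inr (Sum.inr 0) ∧ b = Sum.inr (Sum.inr 2)) ∨
    (a = Sum.inr (Sum.inr 1) ∧ b = Sum.inr (Sum.inr 0)) ∨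
    (a = Sum.inr (Sum.inr 3) ∧ b = Sum.inr (Sum.inr 2)))

namespace BBEAux

variable {V : Type*}

/-- The underlying relation of `bipartiteBigExt`. -/
def bigRel (G : SimpleGraph V) (X : Set V) (a b : V ⊕ V ⊕ Fin 4) : Prop :=
    (∃ u v, a = Sum.inl u ∧ b = Sum.inl v ∧ G.Adj u v) ∨
    (∃ u v, a = Sum.inr (Sum.inl u) ∧ b = Sum.inr (Sum.inl v) ∧ G.Adj u v) ∨
    (∃ u v, a = Sum.inl u ∧ u ∈ X ∧ b = Sum.inr (Sum.inl v) ∧ v ∈ X) ∨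
    (∃ u, a = Sum.inl u ∧ u ∈ X ∧ b = Sum.inr (Sum.inr 2)) ∨
    (∃ v, a = Sum.inr (Sum.inr 0) ∧ b = Sum.inr (Sum.inl v) ∧ v ∈ X) ∨
    (a = Sum.inr (Sum.inr 0) ∧ b = Sum.inr (Sum.inr 2)) ∨
    (a = Sum.inr (Sum.inr 1) ∧ b = Sum.inr (Sum.inr 0)) ∨
    (a = Sum.inr (Sum.inr 3) ∧ b = Sum.inr (Sum.inr 2))

lemma bbe_adj (G : SimpleGraph V) (X : Set V) {a b : V ⊕ V ⊕ Fin 4} :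
    (bipartiteBigExt G X).Adj a b ↔ a ≠ b ∧ (bigRel G X a b ∨ bigRel G X b a) :=
  SimpleGraph.fromRel_adj _ a b

def isP1 (X : Set V) (w : V ⊕ V ⊕ Fin 4) : Prop :=
  (∃ u ∈ X, w = Sum.inl u) ∨ w = Sum.inr (Sum.inr 0)

def isP2 (X : Set V) (w : V ⊕ V ⊕ Fin 4) : Prop :=
  (∃ u ∈ X, w = Sum.inr (Sum.inl u)) ∨ w = Sum.inr (Sum.inr 2)

def isQ (Y : Set V) (w : V ⊕ V ⊕ Fin 4) : Prop := ∃ u ∈ Y, w = Sum.inl u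

def isQ' (Y : Set V) (w : V ⊕ V ⊕ Fin 4) : Prop := ∃ u ∈ Y, w = Sum.inr (Sum.inl u)

/-- The side of the bipartition of `bipartiteBigExt` containing `X`,
the copy of `Y`, and the vertices `k` and `n`. -/
def sideAP (X Y : Set V) : V ⊕ V ⊕ Fin 4 → Prop
  | Sum.inl u => u ∈ X
  | Sum.inr (Sum.inl u) => u ∈ Y
  | Sum.inr (Sum.inr i) => i = 0 ∨ i = 3

variable {G : SimpleGraph V} {X Y : Set V}

lemma tricho (hpart : X ∪ Y = Set.univ) (w : V ⊕ V ⊕ Fin 4) :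
    isP1 X w ∨ isQ Y w ∨ isP2 X w ∨ isQ' Y w ∨
      w = Sum.inr (Sum.inr 1) ∨ w = Sum.inr (Sum.inr 3) := by
  have hXY : ∀ u : V, u ∈ X ∨ u ∈ Y := by
    intro u
    have : u ∈ X ∪ Y := by rw [hpart]; trivial
    exact this
  rcases w with u | u | i
  · rcases hXY u with h | h
    · exact Or.inl (Or.inl ⟨u, h, rfl⟩)
    · exact Or.inr (Or.inl ⟨u, h, rfl⟩)
  · rcases hXY u with h | h
    · exact Or.inr (Or.inr (Or.inl (Or.inl ⟨u, h, rfl⟩)))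
    · exact Or.inr (Or.inr (Or.inr (Or.inl ⟨u, h, rfl⟩)))
  · fin_cases i
    · exact Or.inl (Or.inr rfl)
    · exact Or.inr (Or.inr (Or.inr (Or.inr (Or.inl rfl))))
    · exact Or.inr (Or.inr (Or.inl (Or.inr rfl)))
    · exact Or.inr (Or.inr (Or.inr (Or.inr (Or.inr rfl))))

lemma P1_P2_adj {a b : V ⊕ V ⊕ Fin 4} (ha : isP1 X a) (hb : isP2 X b) :
    (bipartiteBigExt G X).Adj a b := by
  rw [bbe_adj]
  rcases ha with ⟨u, hu, rfl⟩ | rfl <;> rcases hb with ⟨v, hv, rfl⟩ | rfl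
  · exact ⟨by simp, Or.inl (Or.inr (Or.inr (Or.inl ⟨u, v, rfl, hu, rfl, hv⟩)))⟩
  · exact ⟨by simp, Or.inl (Or.inr (Or.inr (Or.inr (Or.inl ⟨u, rfl, hu, rfl⟩))))⟩
  · exact ⟨by simp, Or.inl (Or.inr (Or.inr (Or.inr (Or.inr (Or.inl ⟨v, rfl, rfl, hv⟩)))))⟩
  · exact ⟨by simp, Or.inl (Or.inr (Or.inr (Or.inr (Or.inr (Or.inr (Or.inl ⟨rfl, rfl⟩))))))⟩

lemma not_P1_P2 {w : V ⊕ V ⊕ Fin 4} (h1 : isP1 X w) (h2 : isP2 X w) : False := by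
  rcases h1 with ⟨u, _, rfl⟩ | rfl <;> rcases h2 with ⟨v, _, h⟩ | h <;> simp_all

lemma not_Q_P2 {w : V ⊕ V ⊕ Fin 4} (h1 : isQ Y w) (h2 : isP2 X w) : False := by
  obtain ⟨u, _, rfl⟩ := h1
  rcases h2 with ⟨v, _, h⟩ | h <;> simp_all

lemma not_Q'_P1 {w : V ⊕ V ⊕ Fin 4} (h1 : isQ' Y w) (h2 : isP1 X w) : False := by
  obtain ⟨u, _, rfl⟩ := h1
  rcases h2 with ⟨v, _, h⟩ | h <;> simp_all

lemma adj_inl {u v : V} : (bipartiteBigExt G X).Adj (Sum.inl u) (Sum.inl v) ↔ G.Adj u v := by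
  rw [bbe_adj]
  constructor
  · rintro ⟨hne, hr | hr⟩ <;>
      rcases hr with ⟨u', v', h1, h2, h3⟩ | ⟨u', v', h1, h2, h3⟩ |
        ⟨u', v', h1, h2, h3, h4⟩ | ⟨u', h1, h2, h3⟩ | ⟨v', h1, h2, h3⟩ |
        ⟨h1, h2⟩ | ⟨h1, h2⟩ | ⟨h1, h2⟩ <;> simp_all <;>
      first | exact h3 | exact h3.symm
  · intro h
    exact ⟨by simp [h.ne], Or.inl (Or.inl ⟨u, v, rfl, rfl, h⟩)⟩

lemma adj_inr {u v : V} :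
    (bipartiteBigExt G X).Adj (Sum.inr (Sum.inl u)) (Sum.inr (Sum.inl v)) ↔ G.Adj u v := by
  rw [bbe_adj]
  constructor
  · rintro ⟨hne, hr | hr⟩ <;>
      rcases hr with ⟨u', v', h1, h2, h3⟩ | ⟨u', v', h1, h2, h3⟩ |
        ⟨u', v', h1, h2, h3, h4⟩ | ⟨u', h1, h2, h3⟩ | ⟨v', h1, h2, h3⟩ |
        ⟨h1, h2⟩ | ⟨h1, h2⟩ | ⟨h1, h2⟩ <;> simp_all <;>
      first | exact h3 | exact h3.symm
  · intro h
    exact ⟨by simp [h.ne], Or.inl (Or.inr (Or.inl ⟨u, v, rfl, rfl, h⟩))⟩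

lemma nbr_l {w : V ⊕ V ⊕ Fin 4} (h : (bipartiteBigExt G X).Adj (Sum.inr (Sum.inr 1)) w) :
    w = Sum.inr (Sum.inr 0) := by
  rw [bbe_adj] at h
  obtain ⟨hne, hr | hr⟩ := h <;>
    rcases hr with ⟨u', v', h1, h2, h3⟩ | ⟨u', v', h1, h2, h3⟩ |
      ⟨u', v', h1, h2, h3, h4⟩ | ⟨u', h1, h2, h3⟩ | ⟨v', h1, h2, h3⟩ |
      ⟨h1, h2⟩ | ⟨h1, h2⟩ | ⟨h1, h2⟩ <;> simp_all

lemma nbr_n {w : V ⊕ V ⊕ Fin 4} (h : (bipartiteBigExt G X).Adj (Sum.inr (Sum.inr 3)) w) :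
    w = Sum.inr (Sum.inr 2) := by
  rw [bbe_adj] at h
  obtain ⟨hne, hr | hr⟩ := h <;>
    rcases hr with ⟨u', v', h1, h2, h3⟩ | ⟨u', v', h1, h2, h3⟩ |
      ⟨u', v', h1, h2, h3, h4⟩ | ⟨u', h1, h2, h3⟩ | ⟨v', h1, h2, h3⟩ |
      ⟨h1, h2⟩ | ⟨h1, h2⟩ | ⟨h1, h2⟩ <;> simp_all

lemma nbr_k {w : V ⊕ V ⊕ Fin 4} (h : (bipartiteBigExt G X).Adj (Sum.inr (Sum.inr 0)) w) :
    isP2 X w ∨ w = Sum.inr (Sum.inr 1) := by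
  rw [bbe_adj] at h
  obtain ⟨hne, hr | hr⟩ := h <;>
    rcases hr with ⟨u', v', h1, h2, h3⟩ | ⟨u', v', h1, h2, h3⟩ |
      ⟨u', v', h1, h2, h3, h4⟩ | ⟨u', h1, h2, h3⟩ | ⟨v', h1, h2, h3⟩ |
      ⟨h1, h2⟩ | ⟨h1, h2⟩ | ⟨h1, h2⟩ <;> simp_all <;>
    first | exact Or.inl ⟨v', h3, rfl⟩ | exact Or.inr rfl

lemma nbr_m {w : V ⊕ V ⊕ Fin 4} (h : (bipartiteBigExt G X).Adj (Sum.inr (Sum.inr 2)) w) :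
    isP1 X w ∨ w = Sum.inr (Sum.inr 3) := by
  rw [bbe_adj] at h
  obtain ⟨hne, hr | hr⟩ := h <;>
    rcases hr with ⟨u', v', h1, h2, h3⟩ | ⟨u', v', h1, h2, h3⟩ |
      ⟨u', v', h1, h2, h3, h4⟩ | ⟨u', h1, h2, h3⟩ | ⟨v', h1, h2, h3⟩ |
      ⟨h1, h2⟩ | ⟨h1, h2⟩ | ⟨h1, h2⟩ <;> simp_all <;>
    first | exact Or.inl ⟨u', h2, rfl⟩ | exact Or.inr rfl

lemma nbr_Q (hpart : X ∪ Y = Set.univ) (hdisj : Disjoint X Y)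
    (hY : ∀ a ∈ Y, ∀ b ∈ Y, ¬ G.Adj a b) {u : V} (huY : u ∈ Y)
    {w : V ⊕ V ⊕ Fin 4} (h : (bipartiteBigExt G X).Adj (Sum.inl u) w) :
    ∃ v ∈ X, w = Sum.inl v := by
  have hXY : ∀ a : V, a ∈ X ∨ a ∈ Y := by
    intro a
    have : a ∈ X ∪ Y := by rw [hpart]; trivial
    exact this
  rw [bbe_adj] at h
  obtain ⟨hne, hr | hr⟩ := h <;>
    rcases hr with ⟨u', v', h1, h2, h3⟩ | ⟨u', v', h1, h2, h3⟩ |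
      ⟨u', v', h1, h2, h3, h4⟩ | ⟨u', h1, h2, h3⟩ | ⟨v', h1, h2, h3⟩ |
      ⟨h1, h2⟩ | ⟨h1, h2⟩ | ⟨h1, h2⟩ <;> simp_all
  all_goals first
    | exact Set.disjoint_left.mp hdisj h2 huY
    | (rcases hXY v' with hv | hv
       · exact hv
       · exact absurd h3 (hY _ huY _ hv))
    | (rcases hXY u' with hv | hv
       · exact hv
       · exact absurd h3.symm (hY _ huY _ hv))

lemma nbr_Q' (hpart : X ∪ Y = Set.univ) (hdisj : Disjoint X Y)
    (hY : ∀ a ∈ Y, ∀ b ∈ Y, ¬ G.Adj a b) {u : V} (huY : u ∈ Y)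
    {w : V ⊕ V ⊕ Fin 4} (h : (bipartiteBigExt G X).Adj (Sum.inr (Sum.inl u)) w) :
    ∃ v ∈ X, w = Sum.inr (Sum.inl v) := by
  have hXY : ∀ a : V, a ∈ X ∨ a ∈ Y := by
    intro a
    have : a ∈ X ∪ Y := by rw [hpart]; trivial
    exact this
  rw [bbe_adj] at h
  obtain ⟨hne, hr | hr⟩ := h <;>
    rcases hr with ⟨u', v', h1, h2, h3⟩ | ⟨u', v', h1, h2, h3⟩ |
      ⟨u', v', h1, h2, h3, h4⟩ | ⟨u', h1, h2, h3⟩ | ⟨v', h1, h2, h3⟩ |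
      ⟨h1, h2⟩ | ⟨h1, h2⟩ | ⟨h1, h2⟩ <;> simp_all
  all_goals first
    | exact Set.disjoint_left.mp hdisj h2 huY
    | exact Set.disjoint_left.mp hdisj h4 huY
    | exact Set.disjoint_left.mp hdisj h3 huY
    | (rcases hXY v' with hv | hv
       · exact hv
       · exact absurd h3 (hY _ huY _ hv))
    | (rcases hXY u' with hv | hv
       · exact hv
       · exact absurd h3.symm (hY _ huY _ hv))

lemma indepA (hdisj : Disjoint X Y)
    (hX : ∀ a ∈ X, ∀ b ∈ X, ¬ G.Adj a b) (hY : ∀ a ∈ Y, ∀ b ∈ Y, ¬ G.Adj a b)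
    {a b : V ⊕ V ⊕ Fin 4} (ha : sideAP X Y a) (hb : sideAP X Y b) :
    ¬ bigRel G X a b := by
  rintro (⟨u, v, rfl, rfl, huv⟩ | ⟨u, v, rfl, rfl, huv⟩ | ⟨u, v, rfl, hu, rfl, hv⟩ |
    ⟨u, rfl, hu, rfl⟩ | ⟨v, rfl, rfl, hv⟩ | ⟨rfl, rfl⟩ | ⟨rfl, rfl⟩ | ⟨rfl, rfl⟩) <;>
    simp only [sideAP] at ha hb <;>
    first
      | exact hX u ha v hb huv
      | exact hY u ha v hb huv
      | exact Set.disjoint_left.mp hdisj hv hb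
      | exact absurd ha (by decide)
      | exact absurd hb (by decide)

lemma indepB (hpart : X ∪ Y = Set.univ) (hdisj : Disjoint X Y)
    (hX : ∀ a ∈ X, ∀ b ∈ X, ¬ G.Adj a b) (hY : ∀ a ∈ Y, ∀ b ∈ Y, ¬ G.Adj a b)
    {a b : V ⊕ V ⊕ Fin 4} (ha : ¬ sideAP X Y a) (hb : ¬ sideAP X Y b) :
    ¬ bigRel G X a b := by
  have hXY : ∀ u : V, u ∈ X ∨ u ∈ Y := by
    intro u
    have : u ∈ X ∪ Y := by rw [hpart]; trivial
    exact this
  rintro (⟨u, v, rfl, rfl, huv⟩ | ⟨u, v, rfl, rfl, huv⟩ | ⟨u, v, rfl, hu, rfl, hv⟩ |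
    ⟨u, rfl, hu, rfl⟩ | ⟨v, rfl, rfl, hv⟩ | ⟨rfl, rfl⟩ | ⟨rfl, rfl⟩ | ⟨rfl, rfl⟩) <;>
    simp only [sideAP] at ha hb
  all_goals first
      | exact hY u ((hXY u).resolve_left ha) v ((hXY v).resolve_left hb) huv
      | exact hX u ((hXY u).resolve_right ha) v ((hXY v).resolve_right hb) huv
      | exact ha hu
      | exact ha (by decide)
      | exact hb (by decide)

end BBEAux

open BBEAux in
theorem bipartiteBigExt_chordalBipartite {V : Type*} [Fintype V]
    (G : SimpleGraph V) (X Y : Set V)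
    (hpart : X ∪ Y = Set.univ) (hdisj : Disjoint X Y)
    (hX : ∀ a ∈ X, ∀ b ∈ X, ¬ G.Adj a b)
    (hY : ∀ a ∈ Y, ∀ b ∈ Y, ¬ G.Adj a b)
    -- `G` is chordal bipartite: no induced cycle of length six or more
    (hchordal : ∀ n : ℕ, 6 ≤ n → IsEmpty (SimpleGraph.cycleGraph n ↪g G)) :
    -- `G'` is bipartite, and has no induced cycle of length six or more
    (∃ A B : Set (V ⊕ V ⊕ Fin 4), A ∪ B = Set.univ ∧ Disjoint A B ∧
      (∀ a ∈ A, ∀ b ∈ A, ¬ (bipartiteBigExt G X).Adj a b) ∧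
      (∀ a ∈ B, ∀ b ∈ B, ¬ (bipartiteBigExt G X).Adj a b)) ∧
    (∀ n : ℕ, 6 ≤ n → IsEmpty (SimpleGraph.cycleGraph n ↪g (bipartiteBigExt G X))) := by
  constructor
  · -- bipartiteness
    refine ⟨{w | sideAP X Y w}, {w | ¬ sideAP X Y w}, ?_, ?_, ?_, ?_⟩
    · ext w
      simp only [Set.mem_union, Set.mem_setOf_eq, Set.mem_univ, iff_true]
      exact em _
    · exact Set.disjoint_left.mpr fun a ha hb => hb ha
    · intro a ha b hb hadj
      rw [bbe_adj] at hadj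
      obtain ⟨_, hr | hr⟩ := hadj
      · exact indepA hdisj hX hY ha hb hr
      · exact indepA hdisj hX hY hb ha hr
    · intro a ha b hb hadj
      rw [bbe_adj] at hadj
      obtain ⟨_, hr | hr⟩ := hadj
      · exact indepB hpart hdisj hX hY ha hb hr
      · exact indepB hpart hdisj hX hY hb ha hr
  · -- no long induced cycles
    intro n hn
    obtain ⟨p, rfl⟩ : ∃ p, n = p + 2 := ⟨n - 2, by omega⟩
    have hp : 4 ≤ p := by omega
    letI : CommRing (Fin (p+2)) := Fin.instCommRing (p+2)
    constructor
    intro f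
    -- basic arithmetic facts in `Fin (p+2)`
    have two_ne : (2 : Fin (p+2)) ≠ 0 := by
      intro h
      have h2 := congrArg Fin.val h
      rw [Fin.coe_ofNat_eq_mod, Fin.coe_ofNat_eq_mod,
        Nat.mod_eq_of_lt (by omega), Nat.mod_eq_of_lt (by omega)] at h2
      exact absurd h2 (by norm_num)
    have four_ne : (4 : Fin (p+2)) ≠ 0 := by
      intro h
      have h2 := congrArg Fin.val h
      rw [Fin.coe_ofNat_eq_mod, Fin.coe_ofNat_eq_mod,
        Nat.mod_eq_of_lt (by omega), Nat.mod_eq_of_lt (by omega)] at h2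
      exact absurd h2 (by norm_num)
    -- consecutive vertices are adjacent
    have hcons : ∀ i : Fin (p+2), (bipartiteBigExt G X).Adj (f i) (f (i+1)) := by
      intro i
      rw [f.map_rel_iff, SimpleGraph.cycleGraph_adj]
      right; ring
    have hcons' : ∀ i : Fin (p+2), (bipartiteBigExt G X).Adj (f i) (f (i-1)) := by
      intro i
      rw [f.map_rel_iff, SimpleGraph.cycleGraph_adj]
      left; ring
    -- adjacency in the image forces consecutive indices
    have key : ∀ i j : Fin (p+2), (bipartiteBigExt G X).Adj (f i) (f j) →
        i = j + 1 ∨ i = j - 1 := by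
      intro i j h
      rw [f.map_rel_iff, SimpleGraph.cycleGraph_adj] at h
      rcases h with h | h
      · left; linear_combination h
      · right; linear_combination -h
    -- pendant vertices are not on the cycle
    have hnl : ∀ i, f i ≠ Sum.inr (Sum.inr 1) := by
      intro i hfi
      have e1 : f (i+1) = Sum.inr (Sum.inr 0) := nbr_l (hfi ▸ hcons i)
      have e2 : f (i-1) = Sum.inr (Sum.inr 0) := nbr_l (hfi ▸ hcons' i)
      have : i + 1 = i - 1 := f.injective (e1.trans e2.symm)
      exact two_ne (by linear_combination this)
    have hnn : ∀ i, f i ≠ Sum.inr (Sum.inr 3) := by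
      intro i hfi
      have e1 : f (i+1) = Sum.inr (Sum.inr 2) := nbr_n (hfi ▸ hcons i)
      have e2 : f (i-1) = Sum.inr (Sum.inr 2) := nbr_n (hfi ▸ hcons' i)
      have : i + 1 = i - 1 := f.injective (e1.trans e2.symm)
      exact two_ne (by linear_combination this)
    by_cases hP2 : ∃ i, isP2 X (f i)
    · by_cases hP1 : ∃ i, isP1 X (f i)
      · -- both sides are met
        obtain ⟨i1, hi1⟩ := hP1
        obtain ⟨i2, hi2⟩ := hP2
        by_cases hT : ∃ t, isQ Y (f t) ∨ isQ' Y (f t)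
        · obtain ⟨t, ht | ht⟩ := hT
          · -- `f t` is an original `Y`-vertex
            obtain ⟨u, huY, hu⟩ := ht
            obtain ⟨v1, hv1, e1⟩ := nbr_Q hpart hdisj hY huY (hu ▸ hcons t)
            obtain ⟨v2, hv2, e2⟩ := nbr_Q hpart hdisj hY huY (hu ▸ hcons' t)
            have hA := key i2 (t+1)
              ((P1_P2_adj (Or.inl ⟨v1, hv1, e1⟩) hi2 : (bipartiteBigExt G X).Adj _ _).symm)
            have hB := key i2 (t-1)
              ((P1_P2_adj (Or.inl ⟨v2, hv2, e2⟩) hi2 : (bipartiteBigExt G X).Adj _ _).symm)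
            rcases hA with hA | hA
            · rcases hB with hB | hB
              · exact two_ne (by linear_combination hB - hA)
              · exact four_ne (by linear_combination hB - hA)
            · rcases hB with hB | hB
              · -- i2 = t : then f i2 = f t is both P2 and Q
                have : i2 = t := by rw [hA]; ring
                exact not_Q_P2 (X := X) ⟨u, huY, this ▸ hu⟩ hi2
              · exact two_ne (by linear_combination hB - hA)
          · -- `f t` is a copied `Y`-vertex
            obtain ⟨u, huY, hu⟩ := ht
            obtain ⟨v1, hv1, e1⟩ := nbr_Q' hpart hdisj hY huY (hu ▸ hcons t)
            obtain ⟨v2, hv2, e2⟩ := nbr_Q' hpart hdisj hY huY (hu ▸ hcons' t)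
            have hA := key i1 (t+1)
              (P1_P2_adj hi1 (Or.inl ⟨v1, hv1, e1⟩) : (bipartiteBigExt G X).Adj _ _)
            have hB := key i1 (t-1)
              (P1_P2_adj hi1 (Or.inl ⟨v2, hv2, e2⟩) : (bipartiteBigExt G X).Adj _ _)
            rcases hA with hA | hA
            · rcases hB with hB | hB
              · exact two_ne (by linear_combination hB - hA)
              · exact four_ne (by linear_combination hB - hA)
            · rcases hB with hB | hB
              · have : i1 = t := by rw [hA]; ring
                exact not_Q'_P1 (Y := Y) ⟨u, huY, this ▸ hu⟩ hi1
              · exact two_ne (by linear_combination hB - hA)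
        · -- no `Q` or `Q'` vertices at all : at most 4 vertices, contradiction
          push_neg at hT
          have hsub : (Finset.univ : Finset (Fin (p+2))) ⊆
              {i2 - 1, i2 + 1, i1 - 1, i1 + 1} := by
            intro i _
            have := tricho (X := X) (Y := Y) hpart (f i)
            rcases this with h | h | h | h | h | h
            · -- isP1 : adjacent to f i2
              have := key i i2 (P1_P2_adj h hi2)
              simp only [Finset.mem_insert, Finset.mem_singleton]
              rcases this with h' | h'
              · exact Or.inr (Or.inl h')
              · exact Or.inl h'
            · exact absurd h ((hT i).elim fun a b => a)
            · -- isP2 : adjacent to f i1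
              have := key i i1 ((P1_P2_adj hi1 h).symm)
              simp only [Finset.mem_insert, Finset.mem_singleton]
              rcases this with h' | h'
              · exact Or.inr (Or.inr (Or.inr h'))
              · exact Or.inr (Or.inr (Or.inl h'))
            · exact absurd h ((hT i).elim fun a b => b)
            · exact absurd h (hnl i)
            · exact absurd h (hnn i)
          have hcard := Finset.card_le_card hsub
          have h1 := Finset.card_insert_le (i2 - 1) ({i2 + 1, i1 - 1, i1 + 1} : Finset (Fin (p+2)))
          have h2 := Finset.card_insert_le (i2 + 1) ({i1 - 1, i1 + 1} : Finset (Fin (p+2)))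
          have h3 := Finset.card_insert_le (i1 - 1) ({i1 + 1} : Finset (Fin (p+2)))
          have h4 : ({i1 + 1} : Finset (Fin (p+2))).card = 1 := Finset.card_singleton _
          have h5 : (Finset.univ : Finset (Fin (p+2))).card = p + 2 := by simp
          omega
      · -- no `P1` vertices: the cycle lies in the copy of `G`
        push_neg at hP1
        have himg : ∀ i, ∃ u, f i = Sum.inr (Sum.inl u) := by
          intro i
          have := tricho (X := X) (Y := Y) hpart (f i)
          rcases this with h | h | h | h | h | h
          · exact absurd h (hP1 i)
          · -- a Q vertex: its successor would be a P1 vertex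
            obtain ⟨u, huY, hu⟩ := h
            obtain ⟨v, hvX, e⟩ := nbr_Q hpart hdisj hY huY (hu ▸ hcons i)
            exact absurd (Or.inl ⟨v, hvX, e⟩) (hP1 (i+1))
          · rcases h with ⟨u, _, hu⟩ | h
            · exact ⟨u, hu⟩
            · -- f i = m : its successor is P1 or the pendant n
              rcases nbr_m (h ▸ hcons i) with h' | h'
              · exact absurd h' (hP1 (i+1))
              · exact absurd h' (hnn (i+1))
          · obtain ⟨u, _, hu⟩ := h
            exact ⟨u, hu⟩
          · exact absurd h (hnl i)
          · exact absurd h (hnn i)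
        choose g hg using himg
        refine (hchordal (p+2) hn).false ⟨⟨g, fun i j hij => f.injective ?_⟩, ?_⟩
        · rw [hg i, hg j, hij]
        · intro i j
          rw [← f.map_rel_iff, hg i, hg j, adj_inr]
          exact Iff.rfl
    · -- no `P2` vertices: the cycle lies in `G` itself
      push_neg at hP2
      have himg : ∀ i, ∃ u, f i = Sum.inl u := by
        intro i
        have := tricho (X := X) (Y := Y) hpart (f i)
        rcases this with h | h | h | h | h | h
        · rcases h with ⟨u, _, hu⟩ | h
          · exact ⟨u, hu⟩
          · -- f i = k : its successor is P2 or the pendant l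
            rcases nbr_k (h ▸ hcons i) with h' | h'
            · exact absurd h' (hP2 (i+1))
            · exact absurd h' (hnl (i+1))
        · obtain ⟨u, _, hu⟩ := h
          exact ⟨u, hu⟩
        · exact absurd h (hP2 i)
        · -- a Q' vertex: its successor would be a P2 vertex
          obtain ⟨u, huY, hu⟩ := h
          obtain ⟨v, hvX, e⟩ := nbr_Q' hpart hdisj hY huY (hu ▸ hcons i)
          exact absurd (Or.inl ⟨v, hvX, e⟩) (hP2 (i+1))
        · exact absurd h (hnl i)
        · exact absurd h (hnn i)
      choose g hg using himg
      refine (hchordal (p+2) hn).false ⟨⟨g, fun i j hij => f.injective ?_⟩, ?_⟩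
      · rw [hg i, hg j, hij]
      · intro i j
        rw [← f.map_rel_iff, hg i, hg j, adj_inl]
        exact Iff.rfl
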